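/- For a real symmetric tensor T ∈ (ℝ^d)^{⊗p} (invariant under all permutations of its indices), the injective norm equals the maximum over a single unit vector: max over unit x^(1),...,x^(p) of |⟨T, x^(1)⊗⋯⊗x^(p)⟩| equals max over unit x of |⟨T, x⊗⋯⊗x⟩|. -/

import Mathlib

open Finset Function

namespace BanachKVS

variable {p d : ℕ}

/-- The multilinear form associated to the tensor `T`. -/
def F (T : (Fin p → Fin d) → ℝ) (x : Fin p → Fin d → ℝ) : ℝ :=
  ∑ i : Fin p → Fin d, T i * ∏ k, x k (i k)

/-- Squared Euclidean norm. -/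
def nrm {d : ℕ} (v : Fin d → ℝ) : ℝ := ∑ j, v j ^ 2

/-- The product of unit spheres. -/
def A (p d : ℕ) : Set (Fin p → Fin d → ℝ) := {x | ∀ k, nrm (x k) = 1}

/-- Potential function: squared norm of the sum of the slots. -/
def Phi (x : Fin p → Fin d → ℝ) : ℝ := ∑ j, (∑ m, x m j) ^ 2

lemma contF (T : (Fin p → Fin d) → ℝ) : Continuous (F T) := by
  refine continuous_finset_sum _ fun i _ => Continuous.mul continuous_const ?_
  exact continuous_finset_prod _ fun k _ => (continuous_apply (i k)).comp (continuous_apply k)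

lemma contPhi : Continuous (Phi (p := p) (d := d)) := by
  refine continuous_finset_sum _ fun j _ => Continuous.pow ?_ 2
  exact continuous_finset_sum _ fun m _ => (continuous_apply j).comp (continuous_apply m)

lemma nrm_nonneg (v : Fin d → ℝ) : 0 ≤ nrm v :=
  Finset.sum_nonneg fun j _ => sq_nonneg _

lemma nrm_zero {v : Fin d → ℝ} (h : nrm v = 0) : ∀ j, v j = 0 := by
  intro j
  have := (Finset.sum_eq_zero_iff_of_nonneg (fun m (_ : m ∈ univ) => sq_nonneg (v m))).1 h j
    (mem_univ j)
  exact pow_eq_zero_iff (n := 2) (by norm_num) |>.1 this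

lemma cont_nrm : Continuous (nrm (d := d)) :=
  continuous_finset_sum _ fun j _ => (continuous_apply j).pow 2

lemma compactA : IsCompact (A p d) := by
  have hU : IsCompact {v : Fin d → ℝ | nrm v = 1} := by
    have hclosed : IsClosed {v : Fin d → ℝ | nrm v = 1} := isClosed_eq cont_nrm continuous_const
    refine IsCompact.of_isClosed_subset (isCompact_closedBall (0 : Fin d → ℝ) 1) hclosed ?_
    intro v hv
    simp only [Metric.mem_closedBall, dist_zero_right]
    rw [pi_norm_le_iff_of_nonneg (by norm_num)]
    intro j
    rw [Real.norm_eq_abs, abs_le]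
    have h1 : v j ^ 2 ≤ 1 := by
      rw [← hv]
      exact Finset.single_le_sum (fun m _ => sq_nonneg (v m)) (mem_univ j)
    constructor <;> nlinarith
  have : A p d = Set.pi Set.univ (fun _ : Fin p => {v : Fin d → ℝ | nrm v = 1}) := by
    ext x; simp [A, Set.mem_pi]
  rw [this]
  exact isCompact_univ_pi fun _ => hU

lemma nonemptyA (hp : 1 ≤ p) (hd : 1 ≤ d) : (A p d).Nonempty := by
  refine ⟨fun _ j => if j = ⟨0, hd⟩ then 1 else 0, fun k => ?_⟩
  simp only [nrm]
  rw [Finset.sum_eq_single ⟨0, hd⟩]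
  · simp
  · intro b _ hb; simp [hb]
  · intro h; exact absurd (mem_univ _) h

lemma Fupd1 (T : (Fin p → Fin d) → ℝ) (x : Fin p → Fin d → ℝ) (k : Fin p) (a : Fin d → ℝ) :
    F T (update x k a) = ∑ i : Fin p → Fin d, T i * (a (i k) * ∏ m ∈ univ \ {k}, x m (i m)) := by
  unfold F
  refine Finset.sum_congr rfl fun i _ => ?_
  congr 1
  have h : ∀ m, update x k a m (i m) = update (fun m => x m (i m)) k (a (i k)) m := by
    intro m
    rcases eq_or_ne m k with rfl | h
    · simp
    · simp [h]
  rw [Finset.prod_congr rfl fun m _ => h m, Finset.prod_update_of_mem (mem_univ k)]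

lemma Fupd2 (T : (Fin p → Fin d) → ℝ) (x : Fin p → Fin d → ℝ) {k l : Fin p} (hkl : k ≠ l)
    (a b : Fin d → ℝ) :
    F T (update (update x k a) l b) =
      ∑ i : Fin p → Fin d,
        T i * (a (i k) * b (i l) * ∏ m ∈ (univ \ {l}) \ {k}, x m (i m)) := by
  rw [Fupd1]
  refine Finset.sum_congr rfl fun i _ => ?_
  have hk : k ∈ univ \ ({l} : Finset (Fin p)) := by simp [hkl]
  have h : ∀ m, update x k a m (i m) = update (fun m => x m (i m)) k (a (i k)) m := by
    intro m
    rcases eq_or_ne m k with rfl | h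
    · simp
    · simp [h]
  rw [Finset.prod_congr rfl fun m _ => h m, Finset.prod_update_of_mem hk]
  ring

lemma Fperm (T : (Fin p → Fin d) → ℝ)
    (hsym : ∀ (π : Equiv.Perm (Fin p)) (i : Fin p → Fin d), T (fun k => i (π k)) = T i)
    (σ : Equiv.Perm (Fin p)) (y : Fin p → Fin d → ℝ) :
    F T (fun m => y (σ m)) = F T y := by
  unfold F
  refine Fintype.sum_equiv (Equiv.arrowCongr σ (Equiv.refl (Fin d))) _ _ fun i => ?_
  have h1 : T ((Equiv.arrowCongr σ (Equiv.refl (Fin d))) i) = T i := by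
    have := hsym σ.symm i
    exact this
  rw [h1]
  congr 1
  calc ∏ k : Fin p, y (σ k) (i k)
      = ∏ k : Fin p, (fun m => y m (i (σ.symm m))) (σ k) := by
        refine Finset.prod_congr rfl fun m _ => by simp
    _ = ∏ k : Fin p, y k (i (σ.symm k)) := by
        simpa using Equiv.prod_comp σ (fun m => y m (i (σ.symm m)))
    _ = _ := by
        refine Finset.prod_congr rfl fun m _ => by simp [Equiv.arrowCongr]

lemma update_swap {α : Type*} [DecidableEq α] {β : Type*} (x : α → β) {k l : α} (hkl : k ≠ l)
    (a b : β) :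
    (fun m => update (update x k a) l b (Equiv.swap k l m)) = update (update x k b) l a := by
  funext m
  rcases eq_or_ne m k with rfl | hk
  · rw [Equiv.swap_apply_left, update_self, update_of_ne hkl, update_self]
  · rcases eq_or_ne m l with rfl | hl
    · rw [Equiv.swap_apply_right, update_of_ne hkl, update_self, update_self]
    · rw [Equiv.swap_apply_of_ne_of_ne hk hl]
      simp [hk, hl]

lemma Fswap (T : (Fin p → Fin d) → ℝ)
    (hsym : ∀ (π : Equiv.Perm (Fin p)) (i : Fin p → Fin d), T (fun k => i (π k)) = T i)
    (x : Fin p → Fin d → ℝ) {k l : Fin p} (hkl : k ≠ l) (a b : Fin d → ℝ) :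
    F T (update (update x k a) l b) = F T (update (update x k b) l a) := by
  rw [← Fperm T hsym (Equiv.swap k l) (update (update x k a) l b), update_swap x hkl a b]

lemma updA {xs : Fin p → Fin d → ℝ} (hxs : xs ∈ A p d) {k l : Fin p} (hkl : k ≠ l)
    {c : Fin d → ℝ} (hc : nrm c = 1) : update (update xs k c) l c ∈ A p d := by
  intro m
  rcases eq_or_ne m l with rfl | hl
  · simpa using hc
  · rw [update_of_ne hl]
    rcases eq_or_ne m k with rfl | hk
    · simpa using hc
    · rw [update_of_ne hk]; exact hxs m

lemma sum_upd2 {xs : Fin p → Fin d → ℝ} {k l : Fin p} (hkl : k ≠ l) (c : Fin d → ℝ) (j : Fin d) :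
    ∑ m, update (update xs k c) l c m j =
      2 * c j + ((∑ m, xs m j) - xs k j - xs l j) := by
  have hpt : ∀ m, update (update xs k c) l c m j =
      update (update (fun m => xs m j) k (c j)) l (c j) m := by
    intro m
    rcases eq_or_ne m l with rfl | hl
    · simp
    · rw [update_of_ne hl, update_of_ne hl]
      rcases eq_or_ne m k with rfl | hk
      · simp
      · rw [update_of_ne hk, update_of_ne hk]
  have hk : k ∈ univ \ ({l} : Finset (Fin p)) := by simp [hkl]
  rw [Finset.sum_congr rfl fun m _ => hpt m, Finset.sum_update_of_mem (mem_univ l),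
    Finset.sum_update_of_mem hk]
  rw [Finset.sum_eq_add_sum_sdiff_singleton_of_mem (mem_univ l) (fun m => xs m j),
    Finset.sum_eq_add_sum_sdiff_singleton_of_mem hk (fun m => xs m j)]
  ring

lemma sum_sq_expand (u v : Fin d → ℝ) :
    ∑ j, (u j + v j) ^ 2 = nrm u + 2 * (∑ j, u j * v j) + nrm v := by
  unfold nrm
  rw [Finset.mul_sum, ← Finset.sum_add_distrib, ← Finset.sum_add_distrib]
  exact Finset.sum_congr rfl fun j _ => by ring

lemma core (T : (Fin p → Fin d) → ℝ)
    (hsym : ∀ (π : Equiv.Perm (Fin p)) (i : Fin p → Fin d), T (fun k => i (π k)) = T i)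
    {M : ℝ} (hmaxA : ∀ y ∈ A p d, |F T y| ≤ M)
    {xs : Fin p → Fin d → ℝ} (hxsA : xs ∈ A p d) (hxsM : |F T xs| = M)
    {k l : Fin p} (hne : xs k ≠ xs l) :
    ∃ y ∈ A p d, |F T y| = M ∧ Phi xs < Phi y := by
  have hkl : k ≠ l := fun h => hne (by rw [h])
  set s : Fin d → ℝ := fun j => xs k j + xs l j with hs
  set t : Fin d → ℝ := fun j => xs k j - xs l j with ht
  set w : Fin d → ℝ := fun j => (∑ m, xs m j) - xs k j - xs l j with hw
  set B : (Fin d → ℝ) → (Fin d → ℝ) → ℝ :=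
    fun c c' => F T (update (update xs k c) l c') with hB
  have Brepr : ∀ c c', B c c' =
      ∑ i : Fin p → Fin d,
        T i * (c (i k) * c' (i l) * ∏ m ∈ (univ \ {l}) \ {k}, xs m (i m)) := by
    intro c c'
    simp only [hB]
    exact Fupd2 T xs hkl c c'
  have Bxs : B (xs k) (xs l) = F T xs := by
    simp only [hB]
    rw [update_eq_self k xs, update_eq_self l xs]
  have Bsym : B (xs k) (xs l) = B (xs l) (xs k) := by
    simp only [hB]; exact Fswap T hsym xs hkl _ _
  have hpolar : B s s - B t t = 2 * B (xs k) (xs l) + 2 * B (xs l) (xs k) := by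
    rw [Brepr s s, Brepr t t, Brepr (xs k) (xs l), Brepr (xs l) (xs k),
      ← Finset.sum_sub_distrib, Finset.mul_sum, Finset.mul_sum, ← Finset.sum_add_distrib]
    refine Finset.sum_congr rfl fun i _ => ?_
    simp only [hs, ht]
    ring
  have hpolar4 : B s s - B t t = 4 * F T xs := by
    rw [hpolar, ← Bsym, Bxs]; ring
  -- the diagonal bound
  have diagB : ∀ c, |B c c| ≤ M * nrm c := by
    intro c
    rcases eq_or_ne (nrm c) 0 with h0 | h0
    · have hc0 := nrm_zero h0
      have hz : B c c = 0 := by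
        rw [Brepr]
        exact Finset.sum_eq_zero fun i _ => by rw [hc0 (i k)]; ring
      rw [hz, h0, abs_zero, mul_zero]
    · have hpos : 0 < nrm c := lt_of_le_of_ne (nrm_nonneg c) (Ne.symm h0)
      have hrpos : 0 < Real.sqrt (nrm c) := Real.sqrt_pos.2 hpos
      have hr2 : Real.sqrt (nrm c) ^ 2 = nrm c := Real.sq_sqrt hpos.le
      set r := Real.sqrt (nrm c) with hrdef
      have hsumc : ∑ j, c j ^ 2 = r ^ 2 := by rw [hr2]; rfl
      set ch : Fin d → ℝ := fun j => c j / r with hch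
      have hch1 : nrm ch = 1 := by
        simp only [nrm, hch, div_pow]
        rw [← Finset.sum_div, hsumc, div_self (by positivity)]
      have hble : |B ch ch| ≤ M := by
        have := hmaxA _ (updA hxsA hkl hch1)
        simpa only [hB] using this
      have hscale : B c c = r ^ 2 * B ch ch := by
        rw [Brepr, Brepr, Finset.mul_sum]
        refine Finset.sum_congr rfl fun i _ => ?_
        simp only [hch]
        field_simp
      rw [hscale, abs_mul, abs_of_nonneg (sq_nonneg r), hr2]
      nlinarith [hble, hpos]
  -- equalities from tightness
  have hpar : nrm s + nrm t = 4 := by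
    have h1 : nrm (xs k) = 1 := hxsA k
    have h2 : nrm (xs l) = 1 := hxsA l
    simp only [nrm] at h1 h2 ⊢
    rw [← Finset.sum_add_distrib]
    have he : ∀ j, s j ^ 2 + t j ^ 2 = 2 * xs k j ^ 2 + 2 * xs l j ^ 2 := by
      intro j; simp only [hs, ht]; ring
    rw [Finset.sum_congr rfl fun j _ => he j, Finset.sum_add_distrib, ← Finset.mul_sum,
      ← Finset.mul_sum, h1, h2]
    norm_num
  have habs : |B s s - B t t| = 4 * M := by
    rw [hpolar4, abs_mul, hxsM]
    norm_num
  have htri : |B s s - B t t| ≤ |B s s| + |B t t| := by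
    simpa [sub_eq_add_neg] using abs_add_le (B s s) (-(B t t))
  have hbs := diagB s
  have hbt := diagB t
  have h4 : M * nrm s + M * nrm t = 4 * M := by rw [← mul_add, hpar]; ring
  have E1 : |B s s| = M * nrm s := by linarith
  have E2 : |B t t| = M * nrm t := by linarith
  -- t ≠ 0
  have htne : 0 < nrm t := by
    rcases Function.ne_iff.1 hne with ⟨j, hj⟩
    have htj : t j ≠ 0 := by simp only [ht]; exact sub_ne_zero.2 hj
    have : 0 < t j ^ 2 := by positivity
    exact lt_of_lt_of_le this (Finset.single_le_sum (fun m _ => sq_nonneg (t m)) (mem_univ j))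
  have hsle : nrm s < 4 := by linarith
  -- Phi computations
  have hPhixs : Phi xs = nrm s + 2 * (∑ j, s j * w j) + nrm w := by
    have hj : ∀ j, (∑ m, xs m j) = s j + w j := by
      intro j; simp only [hs, hw]; ring
    rw [Phi, Finset.sum_congr rfl fun j _ => by rw [hj j]]
    exact sum_sq_expand s w
  have hPhiy : ∀ c, Phi (update (update xs k c) l c) =
      4 * nrm c + 4 * (∑ j, c j * w j) + nrm w := by
    intro c
    have hj : ∀ j, (∑ m, update (update xs k c) l c m j) = (fun j => 2 * c j) j + w j := by
      intro j; rw [sum_upd2 hkl c j]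
    rw [Phi, Finset.sum_congr rfl fun j _ => by rw [hj j], sum_sq_expand (fun j => 2 * c j) w]
    have h1 : nrm (fun j => 2 * c j) = 4 * nrm c := by
      simp only [nrm, mul_pow]
      rw [Finset.mul_sum]
      exact Finset.sum_congr rfl fun j _ => by ring
    have h2 : ∑ j, (2 * c j) * w j = 2 * ∑ j, c j * w j := by
      rw [Finset.mul_sum]
      exact Finset.sum_congr rfl fun j _ => by ring
    rw [h1, h2]
    ring
  -- key construction
  have key : ∀ (v : Fin d → ℝ) (u : ℝ), u ^ 2 = 1 → 0 < nrm v → |B v v| = M * nrm v →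
      ∃ y ∈ A p d, |F T y| = M ∧
        Phi y = 4 + 4 * (u * (∑ j, v j * w j) / Real.sqrt (nrm v)) + nrm w := by
    intro v u hu hv hE
    have hrpos : 0 < Real.sqrt (nrm v) := Real.sqrt_pos.2 hv
    have hr2 : Real.sqrt (nrm v) ^ 2 = nrm v := Real.sq_sqrt hv.le
    set r := Real.sqrt (nrm v) with hrdef
    have hsumv : ∑ j, v j ^ 2 = r ^ 2 := by rw [hr2]; rfl
    set c : Fin d → ℝ := fun j => u * v j / r with hc
    have hc1 : nrm c = 1 := by
      simp only [nrm, hc, div_pow, mul_pow, hu, one_mul]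
      rw [← Finset.sum_div, hsumv, div_self (by positivity)]
    refine ⟨update (update xs k c) l c, updA hxsA hkl hc1, ?_, ?_⟩
    · have hFB : F T (update (update xs k c) l c) = B c c := by rw [hB]
      rw [hFB]
      have hBc : B c c = (u ^ 2 / r ^ 2) * B v v := by
        rw [Brepr, Brepr, Finset.mul_sum]
        refine Finset.sum_congr rfl fun i _ => ?_
        simp only [hc]
        field_simp
      rw [hBc, abs_mul, abs_of_nonneg (by positivity : (0:ℝ) ≤ u ^ 2 / r ^ 2), hE, hu, hr2]
      field_simp
    · rw [hPhiy c, hc1]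
      have hcw : ∑ j, c j * w j = u * (∑ j, v j * w j) / r := by
        rw [Finset.mul_sum, Finset.sum_div]
        exact Finset.sum_congr rfl fun j _ => by simp only [hc]; ring
      rw [hcw]
      ring
  -- case analysis on the sign of ⟨s, w⟩
  by_cases hcase : 0 < ∑ j, s j * w j
  · have hns : 0 < nrm s := by
      rcases eq_or_ne (nrm s) 0 with h0 | h0
      · exfalso
        have hz := nrm_zero h0
        have : ∑ j, s j * w j = 0 := Finset.sum_eq_zero fun j _ => by rw [hz j]; ring
        linarith
      · exact lt_of_le_of_ne (nrm_nonneg s) (Ne.symm h0)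
    obtain ⟨y, hyA, hyM, hyPhi⟩ := key s 1 (by norm_num) hns E1
    refine ⟨y, hyA, hyM, ?_⟩
    rw [hyPhi, hPhixs]
    have hrpos : 0 < Real.sqrt (nrm s) := Real.sqrt_pos.2 hns
    have hr2 : Real.sqrt (nrm s) ^ 2 = nrm s := Real.sq_sqrt hns.le
    have hr4 : Real.sqrt (nrm s) < 2 := by nlinarith
    have hq : 4 * (1 * (∑ j, s j * w j) / Real.sqrt (nrm s)) =
        (4 / Real.sqrt (nrm s)) * (∑ j, s j * w j) := by ring
    have h2lt : 2 < 4 / Real.sqrt (nrm s) := by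
      rw [lt_div_iff₀ hrpos]; nlinarith
    have hmul := mul_lt_mul_of_pos_right h2lt hcase
    rw [hq]
    linarith
  · push_neg at hcase
    set e1 : ℝ := if 0 ≤ ∑ j, t j * w j then 1 else -1 with he1def
    have he1 : e1 ^ 2 = 1 := by
      by_cases h : 0 ≤ ∑ j, t j * w j <;> simp [he1def, h]
    have he1w : 0 ≤ e1 * ∑ j, t j * w j := by
      by_cases h : 0 ≤ ∑ j, t j * w j
      · simp only [he1def, if_pos h, one_mul]; exact h
      · push_neg at h
        simp only [he1def, if_neg (not_le.2 h), neg_one_mul]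
        linarith
    obtain ⟨y, hyA, hyM, hyPhi⟩ := key t e1 he1 htne E2
    refine ⟨y, hyA, hyM, ?_⟩
    rw [hyPhi, hPhixs]
    have h0 : 0 ≤ e1 * (∑ j, t j * w j) / Real.sqrt (nrm t) :=
      div_nonneg he1w (Real.sqrt_nonneg _)
    linarith


lemma exists_diag (hp : 1 ≤ p) (hd : 1 ≤ d) (T : (Fin p → Fin d) → ℝ)
    (hsym : ∀ (π : Equiv.Perm (Fin p)) (i : Fin p → Fin d), T (fun k => i (π k)) = T i) :
    ∃ e : Fin d → ℝ, nrm e = 1 ∧ ∀ x ∈ A p d, |F T x| ≤ |F T (fun _ => e)| := by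
  obtain ⟨x₀, hx₀A, hx₀max⟩ :=
    compactA.exists_isMaxOn (nonemptyA hp hd) ((contF T).abs.continuousOn)
  set M := |F T x₀| with hM
  have hmaxA : ∀ y ∈ A p d, |F T y| ≤ M := fun y hy => hx₀max hy
  set K : Set (Fin p → Fin d → ℝ) := A p d ∩ {x | |F T x| = M} with hK
  have hKc : IsCompact K := compactA.inter_right (isClosed_eq (contF T).abs continuous_const)
  have hKne : K.Nonempty := ⟨x₀, hx₀A, rfl⟩
  obtain ⟨xs, hxsK, hxsmax⟩ := hKc.exists_isMaxOn hKne contPhi.continuousOn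
  have hall : ∀ k' l', xs k' = xs l' := by
    intro k' l'
    by_contra hne
    obtain ⟨y, hyA, hyM, hlt⟩ := core T hsym hmaxA hxsK.1 hxsK.2 hne
    have hy : y ∈ K := ⟨hyA, hyM⟩
    have := hxsmax hy
    exact absurd this (not_le.2 hlt)
  refine ⟨xs ⟨0, hp⟩, hxsK.1 _, ?_⟩
  have hxseq : xs = fun _ => xs ⟨0, hp⟩ := funext fun k' => hall k' ⟨0, hp⟩
  intro x hx
  calc |F T x| ≤ M := hmaxA x hx
    _ = |F T xs| := hxsK.2.symm
    _ = |F T (fun _ => xs ⟨0, hp⟩)| := by rw [← hxseq]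

end BanachKVS

/-- (Banach / Kellogg–van der Corput–Schaake) For a real symmetric tensor
`T ∈ (ℝ^d)^{⊗p}`, the injective norm equals the maximum of `|⟨T, x⊗⋯⊗x⟩|` over a
single unit vector `x`. -/
theorem symmetric_injective_norm_eq (p d : ℕ) (hp : 1 ≤ p) (hd : 1 ≤ d)
    (T : (Fin p → Fin d) → ℝ)
    (hsym : ∀ (π : Equiv.Perm (Fin p)) (i : Fin p → Fin d), T (fun k => i (π k)) = T i) :
    sSup {r : ℝ | ∃ x : Fin p → Fin d → ℝ,
        (∀ k, ∑ j, (x k j) ^ 2 = 1) ∧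
        r = |∑ i : Fin p → Fin d, T i * ∏ k, x k (i k)|} =
    sSup {r : ℝ | ∃ x : Fin d → ℝ,
        (∑ j, (x j) ^ 2 = 1) ∧
        r = |∑ i : Fin p → Fin d, T i * ∏ k, x (i k)|} := by
  obtain ⟨e, he1, hemax⟩ := BanachKVS.exists_diag hp hd T hsym
  have hS₁ : IsGreatest {r : ℝ | ∃ x : Fin p → Fin d → ℝ,
      (∀ k, ∑ j, (x k j) ^ 2 = 1) ∧
      r = |∑ i : Fin p → Fin d, T i * ∏ k, x k (i k)|} |BanachKVS.F T (fun _ => e)| := by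
    constructor
    · exact ⟨fun _ => e, fun k => he1, rfl⟩
    · rintro r ⟨x, hx, rfl⟩
      exact hemax x hx
  have hS₂ : IsGreatest {r : ℝ | ∃ x : Fin d → ℝ,
      (∑ j, (x j) ^ 2 = 1) ∧
      r = |∑ i : Fin p → Fin d, T i * ∏ k, x (i k)|} |BanachKVS.F T (fun _ => e)| := by
    constructor
    · exact ⟨e, he1, rfl⟩
    · rintro r ⟨x, hx, rfl⟩
      exact hemax (fun _ => x) (fun k => hx)
  rw [hS₁.csSup_eq, hS₂.csSup_eq]
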